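/- Define polynomials P_k by P_0 = 1 and P_{k+1}(X) = (X + k + 1)(2X + 2k + 1)·P_k(X) - 2(X² - 1/9)·P_k(X + 1). Let φ_1 = 4/9, φ_{n+1} = (2/9)((3n+1)(3n-1))/((n+1)(2n+1))·φ_n. Then for all k ≥ 0 and n ≥ 1, (-1)^k (Δ^k φ)_n = φ_n · P_k(n) / ((n+1)(n+2)···(n+k) · (2n+1)(2n+3)···(2n+2k-1)), where Δ is the forward difference operator. -/

import Mathlib

/-- The coefficient sequence: `φ_1 = 4/9`,
`φ_{n+1} = (2/9)·((3n+1)(3n-1))/((n+1)(2n+1))·φ_n` for `n ≥ 1` (and `φ_0 = 0`). -/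
noncomputable def phiSeq : ℕ → ℝ
  | 0 => 0
  | 1 => 4 / 9
  | (n + 2) =>
      (2 / 9) * ((3 * ((n : ℝ) + 1) + 1) * (3 * ((n : ℝ) + 1) - 1))
        / ((((n : ℝ) + 1) + 1) * (2 * ((n : ℝ) + 1) + 1)) * phiSeq (n + 1)

/-- Forward difference operator `(Δ f)_n = f_{n+1} - f_n`. -/
def fdiff (f : ℕ → ℝ) : ℕ → ℝ := fun n => f (n + 1) - f n

/-- `P_0 = 1`, `P_{k+1}(X) = (X+k+1)(2X+2k+1)·P_k(X) - 2(X² - 1/9)·P_k(X+1)`. -/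
noncomputable def P : ℕ → Polynomial ℝ
  | 0 => 1
  | (k + 1) =>
      (Polynomial.X + Polynomial.C ((k : ℝ) + 1))
          * (2 * Polynomial.X + Polynomial.C (2 * (k : ℝ) + 1)) * P k
        - 2 * (Polynomial.X ^ 2 - Polynomial.C (1 / 9)) * (P k).comp (Polynomial.X + 1)

lemma phi_rec (n : ℕ) (hn : 1 ≤ n) :
    phiSeq (n + 1) * (((n : ℝ) + 1) * (2 * (n : ℝ) + 1))
      = 2 * ((n : ℝ) ^ 2 - 1 / 9) * phiSeq n := by
  obtain ⟨m, rfl⟩ := Nat.exists_eq_add_of_le' hn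
  show phiSeq (m + 2) * _ = _
  rw [phiSeq]
  have h1 : ((m : ℝ) + 1 + 1) ≠ 0 := by positivity
  have h2 : (2 * ((m : ℝ) + 1) + 1) ≠ 0 := by positivity
  push_cast
  field_simp
  ring

lemma P_eval (k : ℕ) (x : ℝ) :
    (P (k + 1)).eval x =
      (x + (k : ℝ) + 1) * (2 * x + 2 * (k : ℝ) + 1) * (P k).eval x
        - 2 * (x ^ 2 - 1 / 9) * (P k).eval (x + 1) := by
  rw [P]
  simp only [Polynomial.eval_sub, Polynomial.eval_mul, Polynomial.eval_add, Polynomial.eval_pow,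
    Polynomial.eval_ofNat, Polynomial.eval_X, Polynomial.eval_C, Polynomial.eval_comp,
    Polynomial.eval_one]
  ring

theorem stmt_12 (k n : ℕ) (hn : 1 ≤ n) :
    (-1 : ℝ) ^ k * (fdiff^[k] phiSeq) n =
      phiSeq n * (P k).eval (n : ℝ) /
        ((∏ j ∈ Finset.range k, ((n : ℝ) + (j : ℝ) + 1)) *
          (∏ j ∈ Finset.range k, (2 * (n : ℝ) + 2 * (j : ℝ) + 1))) := by
  induction k generalizing n with
  | zero => simp [P]
  | succ k ih =>
    have hn1 : (1 : ℝ) ≤ (n : ℝ) := by exact_mod_cast hn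
    set x : ℝ := (n : ℝ) with hx
    have hxpos : 0 < x := lt_of_lt_of_le one_pos hn1
    -- abbreviations
    set A : ℝ := (P k).eval x with hA
    have hB : (P k).eval ((n : ℝ) + 1) = (P k).eval (x + 1) := rfl
    set B : ℝ := (P k).eval (x + 1) with hBdef
    set Q1 : ℝ := ∏ j ∈ Finset.range k, (x + (j : ℝ) + 1) with hQ1def
    set Q2 : ℝ := ∏ j ∈ Finset.range k, (2 * x + 2 * (j : ℝ) + 1) with hQ2def
    set Q1' : ℝ := ∏ j ∈ Finset.range k, (x + 1 + (j : ℝ) + 1) with hQ1'def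
    set Q2' : ℝ := ∏ j ∈ Finset.range k, (2 * (x + 1) + 2 * (j : ℝ) + 1) with hQ2'def
    have hQ1pos : 0 < Q1 := Finset.prod_pos (fun j _ => by positivity)
    have hQ2pos : 0 < Q2 := Finset.prod_pos (fun j _ => by positivity)
    have hQ1'pos : 0 < Q1' := Finset.prod_pos (fun j _ => by positivity)
    have hQ2'pos : 0 < Q2' := Finset.prod_pos (fun j _ => by positivity)
    have hrel1 : Q1' * (x + 1) = Q1 * (x + (k : ℝ) + 1) := by
      rw [hQ1def, hQ1'def, ← Finset.prod_range_succ (fun j => x + (j : ℝ) + 1) k,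
        Finset.prod_range_succ' (fun j => x + (j : ℝ) + 1) k]
      push_cast
      congr 1
      · exact Finset.prod_congr rfl (fun j _ => by ring)
      · ring
    have hrel2 : Q2' * (2 * x + 1) = Q2 * (2 * x + 2 * (k : ℝ) + 1) := by
      rw [hQ2def, hQ2'def, ← Finset.prod_range_succ (fun j => 2 * x + 2 * (j : ℝ) + 1) k,
        Finset.prod_range_succ' (fun j => 2 * x + 2 * (j : ℝ) + 1) k]
      push_cast
      congr 1
      · exact Finset.prod_congr rfl (fun j _ => by ring)
      · ring
    have hphi := phi_rec n hn
    -- IH at n and n+1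
    have ih1 := ih n hn
    have ih2 := ih (n + 1) (le_trans hn (Nat.le_succ n))
    have hcast : ((n + 1 : ℕ) : ℝ) = x + 1 := by push_cast [hx]; ring
    rw [hcast] at ih2
    have hXn : (fdiff^[k] phiSeq) n = (-1 : ℝ) ^ k * (phiSeq n * A / (Q1 * Q2)) := by
      rw [← ih1]
      rw [← mul_assoc, ← mul_pow]
      simp
    have hXn1 : (fdiff^[k] phiSeq) (n + 1)
        = (-1 : ℝ) ^ k * (phiSeq (n + 1) * B / (Q1' * Q2')) := by
      rw [← ih2]
      rw [← mul_assoc, ← mul_pow]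
      simp
    rw [Function.iterate_succ_apply']
    show (-1 : ℝ) ^ (k + 1) * ((fdiff^[k] phiSeq) (n + 1) - (fdiff^[k] phiSeq) n) = _
    rw [hXn, hXn1, Finset.prod_range_succ, Finset.prod_range_succ, P_eval]
    rw [← hA, ← hBdef]
    have hD1 : Q1 * (x + (k : ℝ) + 1) ≠ 0 := by positivity
    have hD2 : Q2 * (2 * x + 2 * (k : ℝ) + 1) ≠ 0 := by positivity
    have e1 : phiSeq n * A / (Q1 * Q2)
        = phiSeq n * (A * ((x + (k : ℝ) + 1) * (2 * x + 2 * (k : ℝ) + 1)))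
            / ((Q1 * (x + (k : ℝ) + 1)) * (Q2 * (2 * x + 2 * (k : ℝ) + 1))) := by
      rw [div_eq_div_iff (by positivity) (by positivity)]
      ring
    have e2 : phiSeq (n + 1) * B / (Q1' * Q2')
        = phiSeq n * (2 * (x ^ 2 - 1 / 9) * B)
            / ((Q1 * (x + (k : ℝ) + 1)) * (Q2 * (2 * x + 2 * (k : ℝ) + 1))) := by
      rw [div_eq_div_iff (by positivity) (by positivity), ← hrel1, ← hrel2]
      linear_combination (B * Q1' * Q2') * hphi
    have hpow : ((-1 : ℝ) ^ (k + 1)) * ((-1 : ℝ) ^ k) = -1 := by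
      rw [← pow_add, show k + 1 + k = 2 * k + 1 by ring, pow_succ, pow_mul]
      norm_num
    calc (-1 : ℝ) ^ (k + 1) * ((-1 : ℝ) ^ k * (phiSeq (n + 1) * B / (Q1' * Q2'))
            - (-1 : ℝ) ^ k * (phiSeq n * A / (Q1 * Q2)))
        = phiSeq n * A / (Q1 * Q2) - phiSeq (n + 1) * B / (Q1' * Q2') := by
          rw [mul_sub, ← mul_assoc, ← mul_assoc, hpow]; ring
      _ = phiSeq n * (A * ((x + (k : ℝ) + 1) * (2 * x + 2 * (k : ℝ) + 1)))
            / ((Q1 * (x + (k : ℝ) + 1)) * (Q2 * (2 * x + 2 * (k : ℝ) + 1)))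
          - phiSeq n * (2 * (x ^ 2 - 1 / 9) * B)
            / ((Q1 * (x + (k : ℝ) + 1)) * (Q2 * (2 * x + 2 * (k : ℝ) + 1))) := by
          rw [e1, e2]
      _ = phiSeq n * ((x + (k : ℝ) + 1) * (2 * x + 2 * (k : ℝ) + 1) * A
            - 2 * (x ^ 2 - 1 / 9) * B)
            / ((Q1 * (x + (k : ℝ) + 1)) * (Q2 * (2 * x + 2 * (k : ℝ) + 1))) := by
          rw [div_sub_div_same]; congr 1; ring
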